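/- For a > 0 and real numbers x (= Re z) with x ≠ 0, the integral ∫_{ℝ} ds / (4·cosh(a(s + x/2))·cosh(a(s − x/2))) equals x/(2·sinh(a·x)). -/

import Mathlib

open MeasureTheory Filter Real

-- integrability of exp(-(b|s|))
lemma integrable_exp_neg_mul_abs' {b : ℝ} (hb : 0 < b) :
    Integrable (fun s : ℝ => Real.exp (-(b * |s|))) := by
  have h1 : IntegrableOn (fun s : ℝ => Real.exp (-(b * |s|))) (Set.Ioi 0) := by
    refine ((exp_neg_integrableOn_Ioi 0 hb).congr_fun (fun s hs => ?_) measurableSet_Ioi)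
    rw [abs_of_pos hs]; ring_nf
  have h2 : IntegrableOn (fun s : ℝ => Real.exp (-(b * |s|))) (Set.Iic 0) := by
    rw [← Measure.map_neg_eq_self (volume : Measure ℝ)]
    have m : MeasurableEmbedding fun x : ℝ => -x := (Homeomorph.neg ℝ).measurableEmbedding
    rw [m.integrableOn_map_iff]
    have : ((fun s : ℝ => Real.exp (-(b * |s|))) ∘ fun x : ℝ => -x)
        = fun s : ℝ => Real.exp (-(b * |s|)) := by
      funext s; simp [Function.comp, abs_neg]
    rw [this]
    have hpre : (fun x : ℝ => -x) ⁻¹' Set.Iic 0 = Set.Ici 0 := by ext t; simp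
    rw [hpre]
    exact (integrableOn_Ici_iff_integrableOn_Ioi).mpr h1
  rw [← integrableOn_univ, ← Set.Iic_union_Ioi (a := (0:ℝ))]
  exact h2.union h1

lemma tendsto_log_cosh_sub : Tendsto (fun t => Real.log (Real.cosh t) - t) atTop
    (nhds (-Real.log 2)) := by
  have heq : ∀ t : ℝ, Real.log (Real.cosh t) - t = Real.log ((1 + Real.exp (-(2*t))) / 2) := by
    intro t
    have h : Real.cosh t = Real.exp t * ((1 + Real.exp (-(2*t))) / 2) := by
      rw [Real.cosh_eq]
      have : Real.exp t * Real.exp (-(2*t)) = Real.exp (-t) := by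
        rw [← Real.exp_add]; ring_nf
      field_simp
      rw [show -(t * 2) = -(2 * t) by ring]
      linarith [this]
    rw [h, Real.log_mul (Real.exp_ne_zero t) (by positivity), Real.log_exp]
    ring
  simp_rw [heq]
  have h0 : Tendsto (fun t : ℝ => (1 + Real.exp (-(2*t))) / 2) atTop (nhds ((1 + 0)/2)) := by
    refine Tendsto.div_const (tendsto_const_nhds.add ?_) 2
    have := Real.tendsto_exp_neg_atTop_nhds_zero.comp
      (tendsto_id.const_mul_atTop (two_pos : (0:ℝ) < 2))
    simpa [Function.comp_def] using this
  have := (Real.continuousAt_log (by norm_num : ((1:ℝ)+0)/2 ≠ 0)).tendsto.comp h0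
  simpa [Function.comp_def, Real.log_div one_ne_zero two_ne_zero] using this

/-- `∫ ds / (4 cosh(a(s+x/2)) cosh(a(s−x/2))) = x/(2 sinh(a x))` for `a > 0`, `x ≠ 0`. -/
theorem integral_inv_cosh_cosh (a x : ℝ) (ha : 0 < a) (hx : x ≠ 0) :
    ∫ s : ℝ, 1 / (4 * Real.cosh (a * (s + x / 2)) * Real.cosh (a * (s - x / 2)))
      = x / (2 * Real.sinh (a * x)) := by
  have hax : a * x ≠ 0 := mul_ne_zero ha.ne' hx
  have hsinh : Real.sinh (a * x) ≠ 0 := by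
    rwa [ne_eq, Real.sinh_eq_zero]
  set c : ℝ := (4 * a * Real.sinh (a * x))⁻¹ with hc
  set F : ℝ → ℝ := fun s =>
    c * (Real.log (Real.cosh (a * (s + x / 2))) - Real.log (Real.cosh (a * (s - x / 2)))) with hF
  set f : ℝ → ℝ := fun s =>
    1 / (4 * Real.cosh (a * (s + x / 2)) * Real.cosh (a * (s - x / 2))) with hf
  -- derivative
  have hderiv : ∀ s : ℝ, HasDerivAt F (f s) s := by
    intro s
    have hu : HasDerivAt (fun s : ℝ => a * (s + x / 2)) a s := by
      simpa using ((hasDerivAt_id s).add_const (x / 2)).const_mul a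
    have hv : HasDerivAt (fun s : ℝ => a * (s - x / 2)) a s := by
      simpa using ((hasDerivAt_id s).sub_const (x / 2)).const_mul a
    have h1 : HasDerivAt (fun s : ℝ => Real.log (Real.cosh (a * (s + x / 2))))
        (Real.sinh (a * (s + x / 2)) * a / Real.cosh (a * (s + x / 2))) s := by
      have := (((Real.hasDerivAt_cosh _).comp s hu).log (Real.cosh_pos _).ne')
      simpa using this
    have h2 : HasDerivAt (fun s : ℝ => Real.log (Real.cosh (a * (s - x / 2))))
        (Real.sinh (a * (s - x / 2)) * a / Real.cosh (a * (s - x / 2))) s := by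
      have := (((Real.hasDerivAt_cosh _).comp s hv).log (Real.cosh_pos _).ne')
      simpa using this
    have h3 := (h1.sub h2).const_mul c
    convert h3 using 1
    · rfl
    · rfl
    · rfl
    have key : Real.sinh (a * (s + x / 2)) * Real.cosh (a * (s - x / 2))
        - Real.cosh (a * (s + x / 2)) * Real.sinh (a * (s - x / 2)) = Real.sinh (a * x) := by
      rw [← Real.sinh_sub]; congr 1; ring
    have hcu := (Real.cosh_pos (a * (s + x / 2))).ne'
    have hcv := (Real.cosh_pos (a * (s - x / 2))).ne'
    rw [hf, hc]
    set U := a * (s + x / 2) with hU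
    set V := a * (s - x / 2) with hV
    have hnum : Real.sinh U * a * Real.cosh V - Real.cosh U * (Real.sinh V * a)
        = a * Real.sinh (a * x) := by linear_combination a * key
    rw [div_sub_div _ _ hcu hcv, hnum]
    field_simp
    ring_nf
    rw [hU, hV]; ring_nf
  -- integrability
  have hint : Integrable f := by
    have hcont : Continuous f := by
      apply Continuous.div continuous_const
      · fun_prop
      · intro s
        positivity
    refine (integrable_exp_neg_mul_abs' (b := 2 * a) (by positivity)).mono'
      hcont.aestronglyMeasurable (Filter.Eventually.of_forall fun s => ?_)
    have hb : Real.exp (2 * a * |s|) ≤ 4 * Real.cosh (a * (s + x / 2)) * Real.cosh (a * (s - x / 2)) := by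
      have hprod : 4 * Real.cosh (a * (s + x / 2)) * Real.cosh (a * (s - x / 2))
          = 2 * Real.cosh (2 * a * s) + 2 * Real.cosh (a * x) := by
        have h1 := Real.cosh_add (a * (s + x / 2)) (a * (s - x / 2))
        have h2 := Real.cosh_sub (a * (s + x / 2)) (a * (s - x / 2))
        have e1 : a * (s + x / 2) + a * (s - x / 2) = 2 * a * s := by ring
        have e2 : a * (s + x / 2) - a * (s - x / 2) = a * x := by ring
        rw [e1] at h1; rw [e2] at h2
        linarith
      have hc1 : Real.exp (|2 * a * s|) ≤ 2 * Real.cosh (2 * a * s) := by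
        rw [Real.cosh_eq]
        rcases abs_cases (2 * a * s) with ⟨h, _⟩ | ⟨h, _⟩ <;> rw [h] <;>
          [linarith [(Real.exp_pos (-(2 * a * s))).le]; linarith [(Real.exp_pos (2 * a * s)).le]]
      have habs : |2 * a * s| = 2 * a * |s| := by
        rw [abs_mul, abs_of_pos (by positivity : (0:ℝ) < 2 * a)]
      have hcosh2 : (0:ℝ) < 2 * Real.cosh (a * x) := by positivity
      calc Real.exp (2 * a * |s|) = Real.exp (|2 * a * s|) := by rw [habs]
        _ ≤ 2 * Real.cosh (2 * a * s) := hc1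
        _ ≤ 2 * Real.cosh (2 * a * s) + 2 * Real.cosh (a * x) := by linarith
        _ = _ := hprod.symm
    have hpos : (0:ℝ) < 4 * Real.cosh (a * (s + x / 2)) * Real.cosh (a * (s - x / 2)) := by
      positivity
    rw [hf]
    simp only [norm_eq_abs]
    rw [abs_of_pos (by positivity)]
    rw [Real.exp_neg, div_le_iff₀ hpos, ← Real.exp_neg] at *
    calc (1:ℝ) = Real.exp (-(2 * a * |s|)) * Real.exp (2 * a * |s|) := by
          rw [← Real.exp_add]; simp
      _ ≤ _ := by
          exact mul_le_mul_of_nonneg_left hb (Real.exp_pos _).le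
  -- limits
  have hutop : Tendsto (fun s : ℝ => a * (s + x / 2)) atTop atTop :=
    (tendsto_atTop_add_const_right _ (x / 2) tendsto_id).const_mul_atTop ha
  have hvtop : Tendsto (fun s : ℝ => a * (s - x / 2)) atTop atTop := by
    have h := tendsto_atTop_add_const_right atTop (-(x / 2)) (tendsto_id (α := ℝ))
    have h2 := h.const_mul_atTop ha
    refine h2.congr fun s => ?_
    show a * (id s + -(x / 2)) = a * (s - x / 2)
    simp only [id_eq]; ring
  have hubot : Tendsto (fun s : ℝ => -(a * (s + x / 2))) atBot atTop := by
    have h0 : Tendsto (fun s : ℝ => -s) atBot atTop := tendsto_neg_atBot_atTop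
    have h := tendsto_atTop_add_const_right atBot (-(x / 2)) h0
    have h2 := h.const_mul_atTop ha
    refine h2.congr fun s => ?_
    show a * (-s + -(x / 2)) = -(a * (s + x / 2))
    ring
  have hvbot : Tendsto (fun s : ℝ => -(a * (s - x / 2))) atBot atTop := by
    have h0 : Tendsto (fun s : ℝ => -s) atBot atTop := tendsto_neg_atBot_atTop
    have h := tendsto_atTop_add_const_right atBot (x / 2) h0
    have h2 := h.const_mul_atTop ha
    refine h2.congr fun s => ?_
    show a * (-s + x / 2) = -(a * (s - x / 2))
    ring
  set g : ℝ → ℝ := fun t => Real.log (Real.cosh t) - t with hg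
  have htop : Tendsto F atTop (nhds (c * (a * x))) := by
    have h1 := (tendsto_log_cosh_sub.comp hutop).sub (tendsto_log_cosh_sub.comp hvtop)
    have h2 := (h1.add_const (a * x)).const_mul c
    have heq : ∀ s : ℝ, c * ((g (a * (s + x / 2)) - g (a * (s - x / 2))) + a * x) = F s := by
      intro s; rw [hF, hg]; simp only; ring
    have h3 : (-Real.log 2 - -Real.log 2 + a * x) = a * x := by ring
    rw [h3] at h2
    exact h2.congr heq
  have hbot : Tendsto F atBot (nhds (-(c * (a * x)))) := by
    have h1 := (tendsto_log_cosh_sub.comp hubot).sub (tendsto_log_cosh_sub.comp hvbot)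
    have h2 := (h1.add_const (-(a * x))).const_mul c
    have heq : ∀ s : ℝ, c * ((g (-(a * (s + x / 2))) - g (-(a * (s - x / 2)))) + -(a * x)) = F s := by
      intro s; rw [hF, hg]; simp only [Real.cosh_neg]; ring
    have h3 : (-Real.log 2 - -Real.log 2 + -(a * x)) = -(a * x) := by ring
    rw [h3] at h2
    have := h2.congr heq
    convert this using 2
    ring
  have := integral_of_hasDerivAt_of_tendsto hderiv hint hbot htop
  rw [this, hc]
  field_simp
  ring
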